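/- Assume the semigroup possesses a compact (𝔹,Σ)-attracting set K ⊆ Φ. Then for every B ∈ 𝔹 the ω-limit set ω(B) attracts B: for every ε > 0 there exists D > 0 such that S(h)B is contained in the open ε-neighbourhood of ω(B) for every h ∈ Σ with dist(h, frontier Σ) ≥ D. -/
import Mathlib


open Metric Filter Topology

noncomputable section

/-- The ω-limit set of a set `B` under the multi-parametric semigroup `S`
with time arrow `Sig`. -/
def omegaSet {m : ℕ} {Φ : Type*} [MetricSpace Φ]
    (S : EuclideanSpace ℝ (Fin m) → Φ → Φ) (Sig : Set (EuclideanSpace ℝ (Fin m)))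
    (B : Set Φ) : Set Φ :=
  {u₀ | ∃ (h : ℕ → EuclideanSpace ℝ (Fin m)) (u : ℕ → Φ),
    (∀ n, h n ∈ Sig) ∧
    Tendsto (fun n => infDist (h n) (frontier Sig)) atTop atTop ∧
    (∀ n, u n ∈ B) ∧
    Tendsto (fun n => S (h n) (u n)) atTop (𝓝 u₀)}

/-- `K` is a `(𝔹,Σ)`-attracting set for the semigroup `S`. -/
def IsAttractingSet {m : ℕ} {Φ : Type*} [MetricSpace Φ]
    (S : EuclideanSpace ℝ (Fin m) → Φ → Φ) (Sig : Set (EuclideanSpace ℝ (Fin m)))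
    (Bor : Set (Set Φ)) (K : Set Φ) : Prop :=
  ∀ B ∈ Bor, ∀ ε : ℝ, 0 < ε → ∃ D : ℝ, 0 < D ∧
    ∀ h ∈ Sig, infDist h (frontier Sig) ≥ D → S h '' B ⊆ thickening ε K

/-- If the semigroup possesses a compact `(𝔹,Σ)`-attracting set `K`, then for every
`B ∈ 𝔹` the ω-limit set `ω(B)` attracts `B`. -/
theorem omegaSet_attracts
    {m : ℕ} {Φ : Type*} [MetricSpace Φ] (hm : 1 ≤ m)
    (C Sig : Set (EuclideanSpace ℝ (Fin m)))
    (S : EuclideanSpace ℝ (Fin m) → Φ → Φ) (Bor : Set (Set Φ))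
    (hCclosed : IsClosed C) (hCint : (interior C).Nonempty)
    (hC0 : (0 : EuclideanSpace ℝ (Fin m)) ∈ C)
    (hCadd : ∀ h₁ ∈ C, ∀ h₂ ∈ C, h₁ + h₂ ∈ C)
    (hCcone : ∀ t : ℝ, 0 ≤ t → ∀ h ∈ C, t • h ∈ C)
    (hS0 : S 0 = id)
    (hSadd : ∀ h₁ ∈ C, ∀ h₂ ∈ C, S (h₁ + h₂) = S h₁ ∘ S h₂)
    (hSigne : Sig.Nonempty) (hSigC : Sig ⊆ C)
    (hfr : frontier C ⊆ frontier Sig)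
    (hcof : ∀ D : ℝ, 0 < D → ∃ h ∈ Sig, infDist h (frontier Sig) ≥ D)
    (K : Set Φ) (hK : IsCompact K) (hKattr : IsAttractingSet S Sig Bor K)
    (B : Set Φ) (hB : B ∈ Bor) :
    ∀ ε : ℝ, 0 < ε → ∃ D : ℝ, 0 < D ∧
      ∀ h ∈ Sig, infDist h (frontier Sig) ≥ D →
        S h '' B ⊆ thickening ε (omegaSet S Sig B) := by
  intro ε hε
  -- trivial case: B empty
  rcases B.eq_empty_or_nonempty with rfl | ⟨b₀, hb₀⟩
  · exact ⟨1, one_pos, fun h _ _ => by simp⟩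
  -- K is nonempty
  have hKne : K.Nonempty := by
    obtain ⟨D₀, hD₀, hA⟩ := hKattr B hB 1 one_pos
    obtain ⟨h₀, h₀S, h₀D⟩ := hcof D₀ hD₀
    have := hA h₀ h₀S h₀D ⟨b₀, hb₀, rfl⟩
    obtain ⟨z, hz, -⟩ := Metric.mem_thickening_iff.1 this
    exact ⟨z, hz⟩
  by_contra hcon
  push_neg at hcon
  have H : ∀ n : ℕ, ∃ h, h ∈ Sig ∧ infDist h (frontier Sig) ≥ (n + 1 : ℝ) ∧
      ∃ u, u ∈ B ∧ S h u ∉ thickening ε (omegaSet S Sig B) := by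
    intro n
    obtain ⟨h, hS, hD, hns⟩ := hcon ((n : ℝ) + 1) (by positivity)
    obtain ⟨x, hxB, hxn⟩ := Set.not_subset.1 hns
    obtain ⟨u, huB, rfl⟩ := hxB
    exact ⟨h, hS, hD, u, huB, hxn⟩
  choose h hSig hD u huB hnot using H
  -- infDist (h n) → ∞
  have hDtop : Tendsto (fun n => infDist (h n) (frontier Sig)) atTop atTop := by
    refine tendsto_atTop_mono (fun n => hD n) ?_
    exact tendsto_atTop_add_const_right _ 1 tendsto_natCast_atTop_atTop
  -- S (h n) (u n) approaches K
  have hinf0 : Tendsto (fun n => infDist (S (h n) (u n)) K) atTop (𝓝 0) := by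
    rw [Metric.tendsto_nhds]
    intro δ hδ
    obtain ⟨D, hDpos, hA⟩ := hKattr B hB (δ / 2) (by positivity)
    filter_upwards [hDtop.eventually_ge_atTop D] with n hn
    have hmem : S (h n) (u n) ∈ thickening (δ / 2) K :=
      hA (h n) (hSig n) hn ⟨u n, huB n, rfl⟩
    have : infDist (S (h n) (u n)) K < δ / 2 :=
      (Metric.mem_thickening_iff_infDist_lt hKne).1 hmem
    have h0 : (0 : ℝ) ≤ infDist (S (h n) (u n)) K := infDist_nonneg
    rw [Real.dist_eq, abs_sub_comm, abs_of_nonpos (by linarith)]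
    linarith
  -- pick nearest points in K
  have hy : ∀ n, ∃ y ∈ K, infDist (S (h n) (u n)) K = dist (S (h n) (u n)) y :=
    fun n => hK.exists_infDist_eq_dist hKne _
  choose y hyK hyd using hy
  obtain ⟨u₀, hu₀K, φ, hφ, hyφ⟩ := hK.tendsto_subseq hyK
  -- S (h (φ n)) (u (φ n)) → u₀
  have hxu₀ : Tendsto (fun n => S (h (φ n)) (u (φ n))) atTop (𝓝 u₀) := by
    rw [tendsto_iff_dist_tendsto_zero]
    have hb : Tendsto (fun n => infDist (S (h (φ n)) (u (φ n))) K
        + dist (y (φ n)) u₀) atTop (𝓝 0) := by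
      have h₁ : Tendsto (fun n => infDist (S (h (φ n)) (u (φ n))) K) atTop (𝓝 0) :=
        hinf0.comp hφ.tendsto_atTop
      have h₂ : Tendsto (fun n => dist (y (φ n)) u₀) atTop (𝓝 0) :=
        tendsto_iff_dist_tendsto_zero.1 hyφ
      simpa using h₁.add h₂
    refine squeeze_zero (fun n => dist_nonneg) (fun n => ?_) hb
    calc dist (S (h (φ n)) (u (φ n))) u₀
        ≤ dist (S (h (φ n)) (u (φ n))) (y (φ n)) + dist (y (φ n)) u₀ :=
          dist_triangle _ _ _
      _ = infDist (S (h (φ n)) (u (φ n))) K + dist (y (φ n)) u₀ := by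
          rw [hyd (φ n)]
  -- u₀ ∈ ω(B)
  have hu₀ω : u₀ ∈ omegaSet S Sig B := by
    refine ⟨fun n => h (φ n), fun n => u (φ n), fun n => hSig (φ n), ?_,
      fun n => huB (φ n), hxu₀⟩
    exact hDtop.comp hφ.tendsto_atTop
  -- contradiction
  have : ∀ᶠ n in atTop, dist (S (h (φ n)) (u (φ n))) u₀ < ε :=
    (tendsto_iff_dist_tendsto_zero.1 hxu₀).eventually_lt_const hε |>.mono
      (fun n hn => by simpa using hn)
  obtain ⟨n, hn⟩ := this.exists
  exact hnot (φ n) (Metric.mem_thickening_iff.2 ⟨u₀, hu₀ω, hn⟩)
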